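/- If A ∈ M_n(ℂ) is normal with eigenvalues λ_1, …, λ_n, then the Davis-Wielandt shell DW(A) equals the convex hull of the points (Re λ_j, Im λ_j, |λ_j|²) ∈ ℝ³, j = 1,…,n. -/

import Mathlib

open Matrix

noncomputable def DW {n : ℕ} (A : Matrix (Fin n) (Fin n) ℂ) : Set (ℝ × ℝ × ℝ) :=
  {v | ∃ x : EuclideanSpace ℂ (Fin n), ‖x‖ = 1 ∧
    v = ((inner ℂ x (Matrix.toEuclideanLin A x) : ℂ).re,
         (inner ℂ x (Matrix.toEuclideanLin A x) : ℂ).im,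
         ‖Matrix.toEuclideanLin A x‖ ^ 2)}

variable {n : ℕ}

private lemma teL_mul (M N : Matrix (Fin n) (Fin n) ℂ) (x : EuclideanSpace ℂ (Fin n)) :
    Matrix.toEuclideanLin (M * N) x = Matrix.toEuclideanLin M (Matrix.toEuclideanLin N x) := by
  simp [Matrix.toEuclideanLin_apply, Matrix.mulVec_mulVec]

private lemma unitary_inner (U : Matrix (Fin n) (Fin n) ℂ)
    (hU : U ∈ Matrix.unitaryGroup (Fin n) ℂ) (x y : EuclideanSpace ℂ (Fin n)) :
    (inner ℂ (Matrix.toEuclideanLin U x) (Matrix.toEuclideanLin U y) : ℂ) = inner ℂ x y := by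
  rw [← LinearMap.adjoint_inner_left, ← Matrix.toEuclideanLin_conjTranspose_eq_adjoint,
    ← teL_mul]
  have h1 : Uᴴ * U = 1 := hU.1
  rw [h1]
  simp [Matrix.toEuclideanLin_apply, Matrix.one_mulVec]

private lemma unitary_norm (U : Matrix (Fin n) (Fin n) ℂ)
    (hU : U ∈ Matrix.unitaryGroup (Fin n) ℂ) (x : EuclideanSpace ℂ (Fin n)) :
    ‖Matrix.toEuclideanLin U x‖ = ‖x‖ := by
  have h := unitary_inner U hU x x
  rw [inner_self_eq_norm_sq_to_K, inner_self_eq_norm_sq_to_K] at h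
  have h2 : (‖Matrix.toEuclideanLin U x‖ : ℝ) ^ 2 = ‖x‖ ^ 2 := by exact_mod_cast h
  nlinarith [norm_nonneg (Matrix.toEuclideanLin U x), norm_nonneg x]

private lemma DW_conj (B U : Matrix (Fin n) (Fin n) ℂ)
    (hU : U ∈ Matrix.unitaryGroup (Fin n) ℂ) : DW (U * B * Uᴴ) = DW B := by
  have hUU : U * Uᴴ = 1 := hU.2
  have hUU' : Uᴴ * U = 1 := hU.1
  have hUs : Uᴴ ∈ Matrix.unitaryGroup (Fin n) ℂ := by
    rw [← Matrix.star_eq_conjTranspose]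
    exact Unitary.star_mem hU
  have key : ∀ z : EuclideanSpace ℂ (Fin n),
      Matrix.toEuclideanLin (U * B * Uᴴ) (Matrix.toEuclideanLin U z)
        = Matrix.toEuclideanLin U (Matrix.toEuclideanLin B z) := by
    intro z
    rw [← teL_mul, ← teL_mul]
    congr 1
    rw [mul_assoc, mul_assoc, hUU', mul_one]
  ext v
  constructor
  · rintro ⟨x, hx, rfl⟩
    set y := Matrix.toEuclideanLin Uᴴ x with hy
    have hxy : x = Matrix.toEuclideanLin U y := by
      rw [hy, ← teL_mul, hUU]
      simp [Matrix.toEuclideanLin_apply, Matrix.one_mulVec]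
    refine ⟨y, ?_, ?_⟩
    · rw [hy, unitary_norm Uᴴ hUs, hx]
    · rw [hxy, key, unitary_inner U hU, unitary_norm U hU]
  · rintro ⟨y, hy, rfl⟩
    refine ⟨Matrix.toEuclideanLin U y, ?_, ?_⟩
    · rw [unitary_norm U hU, hy]
    · rw [key, unitary_inner U hU, unitary_norm U hU]

private lemma teL_diag_apply (lam : Fin n → ℂ) (y : EuclideanSpace ℂ (Fin n)) (i : Fin n) :
    Matrix.toEuclideanLin (Matrix.diagonal lam) y i = lam i * y i := by
  simp [Matrix.toEuclideanLin_apply, Matrix.mulVec_diagonal]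

private lemma inner_diag (lam : Fin n → ℂ) (y : EuclideanSpace ℂ (Fin n)) :
    (inner ℂ y (Matrix.toEuclideanLin (Matrix.diagonal lam) y) : ℂ)
      = ∑ i, (‖y i‖ ^ 2 : ℝ) * lam i := by
  rw [PiLp.inner_apply]
  congr 1; ext i
  rw [teL_diag_apply, RCLike.inner_apply',
    show (starRingEnd ℂ) (y i) * (lam i * y i) = y i * (starRingEnd ℂ) (y i) * lam i by ring,
    Complex.mul_conj']
  push_cast
  ring

private lemma norm_sq_euclid (z : EuclideanSpace ℂ (Fin n)) : ‖z‖ ^ 2 = ∑ i, ‖z i‖ ^ 2 := by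
  rw [EuclideanSpace.norm_eq, Real.sq_sqrt]
  positivity

private lemma norm_diag (lam : Fin n → ℂ) (y : EuclideanSpace ℂ (Fin n)) :
    ‖Matrix.toEuclideanLin (Matrix.diagonal lam) y‖ ^ 2
      = ∑ i, ‖y i‖ ^ 2 * ‖lam i‖ ^ 2 := by
  rw [norm_sq_euclid]
  congr 1; ext i
  rw [teL_diag_apply, norm_mul, mul_pow]
  ring

private lemma DW_diag (lam : Fin n → ℂ) :
    DW (Matrix.diagonal lam) = {v : ℝ × ℝ × ℝ | ∃ w : Fin n → ℝ, (∀ i, 0 ≤ w i) ∧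
      (∑ i, w i) = 1 ∧
      (∑ i, w i • (((lam i).re, (lam i).im, ‖lam i‖ ^ 2) : ℝ × ℝ × ℝ)) = v} := by
  ext v
  constructor
  · rintro ⟨x, hx, rfl⟩
    refine ⟨fun i => ‖x i‖ ^ 2, fun i => by positivity, ?_, ?_⟩
    · rw [← norm_sq_euclid, hx]; norm_num
    · refine Prod.ext ?_ (Prod.ext ?_ ?_)
      · simp only [Prod.fst_sum, Prod.smul_fst, smul_eq_mul, inner_diag, Complex.re_sum,
          Complex.re_ofReal_mul]
      · simp only [Prod.snd_sum, Prod.smul_snd, Prod.fst_sum, Prod.smul_fst, smul_eq_mul,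
          inner_diag, Complex.im_sum, Complex.im_ofReal_mul]
      · simp only [Prod.snd_sum, Prod.smul_snd, smul_eq_mul, norm_diag]
  · rintro ⟨w, hw0, hw1, rfl⟩
    set y : EuclideanSpace ℂ (Fin n) := WithLp.toLp 2 (fun i => ((Real.sqrt (w i) : ℝ) : ℂ)) with hy
    have hyi : ∀ i, ‖y i‖ ^ 2 = w i := by
      intro i
      rw [hy]
      simp only [PiLp.toLp_apply, Complex.norm_real, Real.norm_eq_abs, sq_abs, Real.sq_sqrt (hw0 i)]
    have hn : ‖y‖ = 1 := by
      have h1 : ‖y‖ ^ 2 = 1 := by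
        rw [norm_sq_euclid]
        simp_rw [hyi]
        exact hw1
      nlinarith [norm_nonneg y]
    refine ⟨y, hn, ?_⟩
    refine Prod.ext ?_ (Prod.ext ?_ ?_)
    · simp only [Prod.fst_sum, Prod.smul_fst, smul_eq_mul, inner_diag, Complex.re_sum,
        Complex.re_ofReal_mul, hyi]
    · simp only [Prod.snd_sum, Prod.smul_snd, Prod.fst_sum, Prod.smul_fst, smul_eq_mul,
        inner_diag, Complex.im_sum, Complex.im_ofReal_mul, hyi]
    · simp only [Prod.snd_sum, Prod.smul_snd, smul_eq_mul, norm_diag, hyi]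

private lemma hull_eq (lam : Fin n → ℂ) :
    convexHull ℝ {p : ℝ × ℝ × ℝ | ∃ j : Fin n,
        p = ((lam j).re, (lam j).im, ‖lam j‖ ^ 2)}
      = {v : ℝ × ℝ × ℝ | ∃ w : Fin n → ℝ, (∀ i, 0 ≤ w i) ∧
      (∑ i, w i) = 1 ∧
      (∑ i, w i • (((lam i).re, (lam i).im, ‖lam i‖ ^ 2) : ℝ × ℝ × ℝ)) = v} := by
  set f : Fin n → ℝ × ℝ × ℝ := fun j => ((lam j).re, (lam j).im, ‖lam j‖ ^ 2) with hf
  have hS : {p : ℝ × ℝ × ℝ | ∃ j : Fin n,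
      p = ((lam j).re, (lam j).im, ‖lam j‖ ^ 2)} = Set.range f := by
    ext p
    simp [hf, eq_comm]
  rw [hS]
  apply Set.Subset.antisymm
  · rw [convexHull_range_eq_exists_affineCombination]
    rintro v ⟨s, w, h0, h1, rfl⟩
    refine ⟨fun i => if i ∈ s then w i else 0, ?_, ?_, ?_⟩
    · intro i
      by_cases h : i ∈ s <;> simp [h, h0 i]
    · rw [Finset.sum_ite_mem, Finset.univ_inter, h1]
    · rw [Finset.affineCombination_eq_linear_combination s f w h1]
      simp_rw [ite_smul, zero_smul]
      rw [Finset.sum_ite_mem, Finset.univ_inter]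
  · rintro v ⟨w, hw0, hw1, rfl⟩
    exact mem_convexHull_of_exists_fintype w f hw0 hw1 (fun i => ⟨i, rfl⟩) (by simp [hf])

theorem stmt7 {n : ℕ} (A U : Matrix (Fin n) (Fin n) ℂ) (lam : Fin n → ℂ)
    (hU : U ∈ Matrix.unitaryGroup (Fin n) ℂ)
    (hA : A = U * Matrix.diagonal lam * Uᴴ) :
    DW A = convexHull ℝ
      {p : ℝ × ℝ × ℝ | ∃ j : Fin n,
        p = ((lam j).re, (lam j).im, ‖lam j‖ ^ 2)} := by
  rw [hA, DW_conj _ _ hU, DW_diag, hull_eq]
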